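/- A matrix E ∈ ℂ^{m×m} is idempotent (E² = E) if and only if there exist natural numbers p, q and matrices U ∈ ℂ^{m×p}, V ∈ ℂ^{q×m} such that E = U(VU)†V. -/

import Mathlib

open Matrix

/-- The four Penrose conditions characterizing the Moore-Penrose inverse. -/
def IsMoorePenrose {m n : ℕ} (A : Matrix (Fin m) (Fin n) ℂ)
    (X : Matrix (Fin n) (Fin m) ℂ) : Prop :=
  A * X * A = A ∧ X * A * X = X ∧ (A * X)ᴴ = A * X ∧ (X * A)ᴴ = X * A

/-- The range (column space) of a matrix, as a subspace of Euclidean space. -/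
noncomputable def mrange {m n : ℕ} (A : Matrix (Fin m) (Fin n) ℂ) :
    Submodule ℂ (EuclideanSpace ℂ (Fin m)) :=
  LinearMap.range (Matrix.toEuclideanLin A)

/-- The null space of a matrix, as a subspace of Euclidean space. -/
noncomputable def mker {m n : ℕ} (A : Matrix (Fin m) (Fin n) ℂ) :
    Submodule ℂ (EuclideanSpace ℂ (Fin n)) :=
  LinearMap.ker (Matrix.toEuclideanLin A)

/-- A matrix `E ∈ ℂ^{m×m}` is idempotent if and only if there exist matrices
`U ∈ ℂ^{m×p}`, `V ∈ ℂ^{q×m}` such that `E = U (VU)† V`. -/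
theorem stmt5 {m : ℕ} (E : Matrix (Fin m) (Fin m) ℂ) :
    E * E = E ↔
      ∃ (p q : ℕ) (U : Matrix (Fin m) (Fin p) ℂ) (V : Matrix (Fin q) (Fin m) ℂ)
        (X : Matrix (Fin p) (Fin q) ℂ), IsMoorePenrose (V * U) X ∧ E = U * X * V := by
  constructor
  · intro hE
    set f := Matrix.toLin' E with hf
    have hidem : f ∘ₗ f = f := by
      rw [hf, ← Matrix.toLin'_mul, hE]
    set W := LinearMap.range f with hW
    have hb : ∃ b : Module.Basis (Fin (Module.finrank ℂ W)) ℂ W, True :=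
      ⟨Module.finBasis ℂ W, trivial⟩
    obtain ⟨b, -⟩ := hb
    set bm := Pi.basisFun ℂ (Fin m) with hbm
    have hcomp : f.rangeRestrict ∘ₗ W.subtype = LinearMap.id := by
      apply LinearMap.ext
      intro w
      obtain ⟨x, hx⟩ := w.2
      have hfw : f (w : Fin m → ℂ) = (w : Fin m → ℂ) := by
        conv_lhs => rw [← hx]
        rw [← LinearMap.comp_apply, hidem, hx]
      apply Subtype.ext
      simpa using hfw
    refine ⟨Module.finrank ℂ W, Module.finrank ℂ W,
      LinearMap.toMatrix b bm W.subtype, LinearMap.toMatrix bm b f.rangeRestrict, 1, ?_, ?_⟩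
    · have h1 : LinearMap.toMatrix bm b f.rangeRestrict * LinearMap.toMatrix b bm W.subtype
          = 1 := by
        rw [← LinearMap.toMatrix_comp b bm b _ _, hcomp, LinearMap.toMatrix_id]
      rw [h1]
      refine ⟨by simp, by simp, by simp, by simp⟩
    · have h2 : LinearMap.toMatrix b bm W.subtype * LinearMap.toMatrix bm b f.rangeRestrict
          = E := by
        rw [← LinearMap.toMatrix_comp bm b bm _ _, LinearMap.subtype_comp_codRestrict,
          hbm, LinearMap.toMatrix_eq_toMatrix', hf, LinearMap.toMatrix'_toLin']
      rw [Matrix.mul_one, h2]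
  · rintro ⟨p, q, U, V, X, ⟨-, h2, -, -⟩, hE⟩
    rw [hE]
    have key : U * X * V * (U * X * V) = U * (X * (V * U) * X) * V := by
      simp only [Matrix.mul_assoc]
    rw [key, h2]
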